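/- Let φ ∈ k((X^{-1})) be the root of Y² + XY − 1 = 0 with |φ|_∞ < 1, over a field k of characteristic p > 0. Writing φ = Σ_{i=1}^∞ c_i X^{-i}, one has c_{2r} = 0 for all r ≥ 1 and c_{2r+1} = ((−1)^r · C_r mod p)·1, where C_r is the r-th Catalan number. -/

import Mathlib

open Finset

/-- integer coefficient sequence: 0 at even indices, `(-1)^r * catalan r` at `2r+1`. -/
private def gcoef : ℕ → ℤ := fun n => if n % 2 = 1 then (-1) ^ (n / 2) * catalan (n / 2) else 0

private lemma g_even (r : ℕ) : gcoef (2 * r) = 0 := by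
  simp [gcoef, Nat.mul_mod_right]

private lemma g_odd (r : ℕ) : gcoef (2 * r + 1) = (-1) ^ r * catalan r := by
  have h1 : (2 * r + 1) % 2 = 1 := by omega
  have h2 : (2 * r + 1) / 2 = r := by omega
  simp [gcoef, h1, h2]

private lemma sum_double (t : ℕ → ℤ) (s : ℕ) :
    ∑ i ∈ range (2 * s), t i = ∑ i ∈ range s, (t (2 * i) + t (2 * i + 1)) := by
  induction s with
  | zero => simp
  | succ n ih =>
      have : 2 * (n + 1) = (2 * n + 1) + 1 := by ring
      rw [this, Finset.sum_range_succ, Finset.sum_range_succ, ih, Finset.sum_range_succ]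
      ring

private lemma catalan_conv (s : ℕ) (hs : 1 ≤ s) :
    ∑ i ∈ range s, (catalan i : ℤ) * catalan (s - 1 - i) = catalan s := by
  cases s with
  | zero => omega
  | succ n =>
      rw [catalan_succ', Finset.Nat.sum_antidiagonal_eq_sum_range_succ_mk]
      push_cast
      exact Finset.sum_congr rfl fun i _ => by norm_num

private lemma gkey (n : ℕ) :
    gcoef (n + 1) = (if n = 0 then 1 else 0) - ∑ i ∈ range (n + 1), gcoef i * gcoef (n - i) := by
  rcases Nat.even_or_odd n with ⟨s, hs⟩ | ⟨s, hs⟩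
  · -- n = 2s
    subst hs
    rcases Nat.eq_zero_or_pos s with rfl | hspos
    · simp [gcoef]
    · have hne : s + s ≠ 0 := by omega
      have hss : s + s = 2 * s := by ring
      rw [hss, if_neg (by omega)]
      have hL : gcoef (2 * s + 1) = (-1) ^ s * catalan s := g_odd s
      rw [hL, Finset.sum_range_succ]
      have hlast : gcoef (2 * s) * gcoef (2 * s - 2 * s) = 0 := by
        rw [g_even]; ring
      rw [hlast, add_zero, sum_double (fun i => gcoef i * gcoef (2 * s - i)) s]
      have hterm : ∀ i ∈ range s,
          (gcoef (2 * i) * gcoef (2 * s - 2 * i) + gcoef (2 * i + 1) * gcoef (2 * s - (2 * i + 1)))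
            = (-1) ^ (s - 1) * ((catalan i : ℤ) * catalan (s - 1 - i)) := by
        intro i hi
        rw [Finset.mem_range] at hi
        have h1 : 2 * s - 2 * i = 2 * (s - i) := by omega
        have h2 : 2 * s - (2 * i + 1) = 2 * (s - 1 - i) + 1 := by omega
        rw [h1, g_even, h2, g_odd, g_odd]
        have h3 : i + (s - 1 - i) = s - 1 := by omega
        calc (0 : ℤ) * gcoef (2 * (s - i)) +
              (-1) ^ i * catalan i * ((-1) ^ (s - 1 - i) * catalan (s - 1 - i))
            = (-1) ^ (i + (s - 1 - i)) * ((catalan i : ℤ) * catalan (s - 1 - i)) := by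
              rw [pow_add]; ring
          _ = (-1) ^ (s - 1) * ((catalan i : ℤ) * catalan (s - 1 - i)) := by rw [h3]
      rw [Finset.sum_congr rfl hterm, ← Finset.mul_sum, catalan_conv s hspos]
      have hpow : ((-1 : ℤ)) ^ s = -((-1) ^ (s - 1)) := by
        conv_lhs => rw [show s = (s - 1) + 1 from by omega]
        rw [pow_succ]; ring
      rw [hpow]; ring
  · -- n = 2s+1
    subst hs
    have hL : gcoef (2 * s + 1 + 1) = 0 := by
      have : 2 * s + 1 + 1 = 2 * (s + 1) := by ring
      rw [this, g_even]
    rw [hL, if_neg (by omega)]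
    have hz : ∀ i ∈ range (2 * s + 1 + 1), gcoef i * gcoef (2 * s + 1 - i) = 0 := by
      intro i hi
      rw [Finset.mem_range] at hi
      rcases Nat.even_or_odd i with ⟨a, ha⟩ | ⟨a, ha⟩
      · have : i = 2 * a := by omega
        rw [this, g_even, zero_mul]
      · have h1 : i = 2 * a + 1 := by omega
        have h2 : 2 * s + 1 - i = 2 * (s - a) := by omega
        rw [h2, g_even, mul_zero]
    rw [Finset.sum_congr rfl hz]
    simp

private noncomputable def Qser (k : Type*) [Field k] : PowerSeries k :=
  PowerSeries.mk fun n => ((gcoef n : ℤ) : k)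

private lemma Qser_eq (k : Type*) [Field k] :
    (PowerSeries.X : PowerSeries k) * (Qser k) ^ 2 + Qser k - PowerSeries.X = 0 := by
  ext n
  rw [sq]
  cases n with
  | zero =>
      simp [Qser, gcoef, PowerSeries.coeff_X]
  | succ n =>
      rw [map_sub, map_add, PowerSeries.coeff_succ_X_mul, PowerSeries.coeff_X,
        PowerSeries.coeff_mul, Finset.Nat.sum_antidiagonal_eq_sum_range_succ_mk]
      simp only [Qser, PowerSeries.coeff_mk, map_zero]
      have this1 := congrArg (fun z : ℤ => (z : k)) (gkey n)
      push_cast [apply_ite (fun z : ℤ => (z : k))] at this1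
      rw [this1]
      have hif : (if n = 0 then (1 : k) else 0) = (if n + 1 = 1 then (1 : k) else 0) := by
        by_cases h : n = 0 <;> simp [h]
      rw [hif]
      push_cast
      ring

private lemma ofPS_coeff_neg {k : Type*} [Field k] (x : PowerSeries k) (m : ℤ) (hm : m < 0) :
    (HahnSeries.ofPowerSeries ℤ k x).coeff m = 0 := by
  rw [HahnSeries.ofPowerSeries_apply]
  apply HahnSeries.embDomain_notin_range
  rintro ⟨n, hn⟩
  simp at hn
  omega

theorem goldenRatio_series_catalan (k : Type*) [Field k] (p : ℕ) (hp : p.Prime) [CharP k p]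
    (φ : LaurentSeries k)
    (hsmall : ∀ m : ℤ, m ≤ 0 → φ.coeff m = 0)
    (hroot : φ ^ 2 + (HahnSeries.single (-1 : ℤ) (1 : k)) * φ - 1 = 0) :
    (∀ r : ℕ, 1 ≤ r → φ.coeff (2 * (r : ℤ)) = 0) ∧
    (∀ r : ℕ, φ.coeff (2 * (r : ℤ) + 1) = (((-1 : ℤ) ^ r * (catalan r : ℤ) : ℤ) : k)) := by
  set ψ : LaurentSeries k := HahnSeries.ofPowerSeries ℤ k (Qser k) with hψ
  set s : LaurentSeries k := HahnSeries.single (1 : ℤ) (1 : k) with hsdef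
  have key : s * HahnSeries.single (-1 : ℤ) (1 : k) = 1 := by
    rw [hsdef, HahnSeries.single_mul_single]
    norm_num
  -- ψ satisfies s ψ² + ψ - s = 0
  have hψeq : s * ψ ^ 2 + ψ - s = 0 := by
    have := congrArg (HahnSeries.ofPowerSeries ℤ k) (Qser_eq k)
    simpa [map_add, map_sub, map_mul, map_pow, HahnSeries.ofPowerSeries_X, hψ, hsdef] using this
  -- φ satisfies s φ² + φ - s = 0
  have hφeq : s * φ ^ 2 + φ - s = 0 := by
    linear_combination s * hroot - φ * key
  have hfactor : (φ - ψ) * (s * (φ + ψ) + 1) = 0 := by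
    linear_combination hφeq - hψeq
  have hne : s * (φ + ψ) + 1 ≠ 0 := by
    intro h
    have hthis := congrArg (fun x : LaurentSeries k => x.coeff 0) h
    simp only [HahnSeries.coeff_add, HahnSeries.coeff_one, HahnSeries.coeff_zero] at hthis
    have h0 : ((φ + ψ) * HahnSeries.single (1 : ℤ) (1 : k)).coeff ((-1 : ℤ) + 1)
        = (φ + ψ).coeff (-1) * 1 := HahnSeries.coeff_mul_single_add
    norm_num at h0
    have hφn : φ.coeff (-1) = 0 := hsmall _ (by norm_num)
    have hψn : ψ.coeff (-1) = 0 := ofPS_coeff_neg _ _ (by norm_num)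
    rw [hsdef, mul_comm (HahnSeries.single (1 : ℤ) (1 : k)) (φ + ψ), h0, hφn, hψn] at hthis
    norm_num at hthis
  have hφψ : φ = ψ := by
    rcases mul_eq_zero.mp hfactor with h | h
    · exact sub_eq_zero.mp h
    · exact absurd h hne
  constructor
  · intro r _
    rw [hφψ]
    have hc : (2 * (r : ℤ)) = ((2 * r : ℕ) : ℤ) := by push_cast; ring
    rw [hc, hψ, HahnSeries.ofPowerSeries_apply_coeff]
    simp [Qser, g_even]
  · intro r
    rw [hφψ]
    have hc : (2 * (r : ℤ) + 1) = ((2 * r + 1 : ℕ) : ℤ) := by push_cast; ring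
    rw [hc, hψ, HahnSeries.ofPowerSeries_apply_coeff]
    simp only [Qser, PowerSeries.coeff_mk]
    rw [g_odd]
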